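/- Let μ, β ∈ ℝ, η > 0, σ > 0, and set σ̂ := √(η² + σ²) and σ̃ := η²/σ̂. For every θ ∈ ℝ, letting z := (θ − μ + β)/σ̂, the double integral ∫_θ^∞ ( ∫_{−∞}^∞ w · (1/η)·φ((w−μ)/η) · (1/σ)·φ((ŵ−w+β)/σ) dw ) dŵ equals μ·(1 − Φ(z)) + σ̃·φ(z). (In the selection model this computes the expected contribution to the utility of candidates whose quality estimate Ŵ = W − β + σε exceeds the threshold θ, where W ∼ N(μ, η²) and ε ∼ N(0,1) are independent.) -/

import Mathlib

noncomputable def gpdf (t : ℝ) : ℝ := Real.exp (-t ^ 2 / 2) / Real.sqrt (2 * Real.pi)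

noncomputable def gcdf (x : ℝ) : ℝ := ∫ t in Set.Iic x, gpdf t

noncomputable def gquant : ℝ → ℝ := Function.invFun gcdf

noncomputable def sHat (η σ : ℝ) : ℝ := Real.sqrt (η ^ 2 + σ ^ 2)

noncomputable def sTil (η σ : ℝ) : ℝ := η ^ 2 / sHat η σ

def Dset (pA α : ℝ) : Set ℝ :=
  {x | x ∈ Set.Ioo (0:ℝ) 1 ∧ (α - pA * x) / (1 - pA) ∈ Set.Ioo (0:ℝ) 1}

noncomputable def Qfun (pA α μA μB sA sB x : ℝ) : ℝ :=
  (1 / α) * (pA * (μA * x + sA * gpdf (gquant (1 - x)))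
    + (1 - pA) * (μB * ((α - pA * x) / (1 - pA))
      + sB * gpdf (gquant (1 - (α - pA * x) / (1 - pA)))))

noncomputable def clampTo (lo hi x : ℝ) : ℝ := min hi (max lo x)


open MeasureTheory Real Set Filter

lemma gpdf_eq : gpdf = fun t : ℝ => Real.exp (-(1/2) * t ^ 2) / Real.sqrt (2 * Real.pi) := by
  funext t; rw [gpdf]; ring_nf

lemma integrable_gpdf : Integrable gpdf := by
  rw [gpdf_eq]
  exact (integrable_exp_neg_mul_sq (by norm_num : (0:ℝ) < 1/2)).div_const _

lemma integrable_id_gpdf : Integrable (fun x : ℝ => x * gpdf x) := by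
  have h := (integrable_mul_exp_neg_mul_sq (by norm_num : (0:ℝ) < 1/2)).div_const
    (Real.sqrt (2 * Real.pi))
  refine h.congr (Filter.Eventually.of_forall fun x => ?_)
  rw [gpdf_eq]; ring

lemma integral_gpdf : ∫ x : ℝ, gpdf x = 1 := by
  rw [gpdf_eq]
  rw [MeasureTheory.integral_div, integral_gaussian]
  rw [show Real.pi / (1/2) = 2 * Real.pi by ring]
  have : Real.sqrt (2 * Real.pi) ≠ 0 := by positivity
  field_simp

lemma gpdf_neg (x : ℝ) : gpdf (-x) = gpdf x := by simp [gpdf]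

lemma integral_id_gpdf : ∫ x : ℝ, x * gpdf x = 0 := by
  have h := MeasureTheory.integral_neg_eq_self (fun x : ℝ => x * gpdf x) volume
  simp only [gpdf_neg, neg_mul] at h
  rw [MeasureTheory.integral_neg] at h
  linarith

lemma continuous_gpdf : Continuous gpdf := by
  rw [gpdf_eq]
  exact (Real.continuous_exp.comp (by continuity)).div_const _

lemma hasDerivAt_neg_gpdf (x : ℝ) : HasDerivAt (fun t => -gpdf t) (x * gpdf x) x := by
  have h1 : HasDerivAt (fun t : ℝ => -t ^ 2 / 2) (-(2 * x ^ 1) / 2) x :=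
    ((hasDerivAt_pow 2 x).neg).div_const 2
  have h2 := ((h1.exp).div_const (Real.sqrt (2 * Real.pi))).neg
  have : -(Real.exp (-x ^ 2 / 2) * (-(2 * x ^ 1) / 2) / Real.sqrt (2 * Real.pi))
      = x * gpdf x := by rw [gpdf]; ring
  rw [this] at h2
  exact h2

lemma tendsto_gpdf_atTop : Tendsto gpdf atTop (nhds 0) := by
  rw [gpdf_eq]
  have h1 : Tendsto (fun t : ℝ => -(1/2) * t ^ 2) atTop atBot := by
    apply Tendsto.const_mul_atTop_of_neg (by norm_num : -(1/2 : ℝ) < 0)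
    exact tendsto_pow_atTop (by norm_num)
  have h2 := (Real.tendsto_exp_atBot.comp h1).div_const (Real.sqrt (2 * Real.pi))
  simpa using h2

lemma integral_Ioi_id_gpdf (z : ℝ) : ∫ x in Ioi z, x * gpdf x = gpdf z := by
  have h := integral_Ioi_of_hasDerivAt_of_tendsto
    (f := fun t => -gpdf t) (f' := fun x => x * gpdf x) (a := z) (m := 0)
    (continuous_gpdf.neg.continuousWithinAt)
    (fun x _ => hasDerivAt_neg_gpdf x)
    (integrable_id_gpdf.integrableOn)
    (by simpa using tendsto_gpdf_atTop.neg)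
  simpa using h

lemma integral_Ioi_gpdf (z : ℝ) : ∫ x in Ioi z, gpdf x = 1 - gcdf z := by
  have h := intervalIntegral.integral_Iic_add_Ioi (b := z) (μ := volume)
    integrable_gpdf.integrableOn integrable_gpdf.integrableOn
  rw [integral_gpdf] at h
  rw [gcdf]
  linarith

lemma setIntegral_comp_add_right_Ioi (f : ℝ → ℝ) (a c : ℝ) :
    ∫ x in Ioi a, f (x + c) = ∫ x in Ioi (a + c), f x := by
  rw [← integral_indicator measurableSet_Ioi, ← integral_indicator measurableSet_Ioi,
    ← integral_add_right_eq_self ((Ioi (a + c)).indicator f) c]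
  congr 1
  funext x
  simp only [Set.indicator_apply, Set.mem_Ioi, add_lt_add_iff_right]

lemma gpdf_mul_gpdf {a b u t : ℝ} (h : a ^ 2 + b ^ 2 = u ^ 2 + t ^ 2) :
    gpdf a * gpdf b = gpdf u * gpdf t := by
  simp only [gpdf, div_mul_div_comm, ← Real.exp_add]
  congr 2
  linarith

lemma integral_mul_gpdf_div (m v : ℝ) (hv : 0 < v) :
    ∫ w : ℝ, w * ((1 / v) * gpdf ((w - m) / v)) = m := by
  have hv' : v ≠ 0 := hv.ne'
  have h1 : (∫ w : ℝ, w * ((1 / v) * gpdf ((w - m) / v)))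
      = ∫ x : ℝ, (x + m) * ((1 / v) * gpdf (x / v)) := by
    rw [← integral_add_right_eq_self (fun w => w * ((1 / v) * gpdf ((w - m) / v))) m]
    simp only [add_sub_cancel_right]
  have hint1 : Integrable (fun x : ℝ => x * ((1 / v) * gpdf (x / v))) :=
    (integrable_id_gpdf.comp_div hv').congr (Filter.Eventually.of_forall fun x => by ring)
  have hint2 : Integrable (fun x : ℝ => m * ((1 / v) * gpdf (x / v))) :=
    ((integrable_gpdf.comp_div hv').const_mul (m * (1 / v))).congr
      (Filter.Eventually.of_forall fun x => by ring)
  have h3 : ∫ x : ℝ, x * ((1 / v) * gpdf (x / v)) = 0 := by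
    have heq : (fun x : ℝ => x * ((1 / v) * gpdf (x / v)))
        = fun x : ℝ => (v * (x / v)) * ((1 / v) * gpdf (x / v)) := by
      funext x; rw [mul_div_cancel₀ _ hv']
    rw [heq, MeasureTheory.Measure.integral_comp_div (fun y => (v * y) * ((1 / v) * gpdf y)) v]
    have : ∫ y : ℝ, (v * y) * ((1 / v) * gpdf y) = ∫ y : ℝ, y * gpdf y := by
      congr 1; funext y; field_simp
    rw [this, integral_id_gpdf, smul_zero]
  have h4 : ∫ x : ℝ, m * ((1 / v) * gpdf (x / v)) = m := by
    have heq : (fun x : ℝ => m * ((1 / v) * gpdf (x / v)))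
        = fun x : ℝ => (m * (1 / v)) * gpdf (x / v) := by funext x; ring
    rw [heq, MeasureTheory.integral_const_mul,
      MeasureTheory.Measure.integral_comp_div gpdf v, integral_gpdf,
      abs_of_pos hv]
    field_simp
    rw [smul_eq_mul, mul_one]
  rw [h1]
  rw [show (fun x : ℝ => (x + m) * ((1 / v) * gpdf (x / v)))
      = fun x : ℝ => x * ((1 / v) * gpdf (x / v)) + m * ((1 / v) * gpdf (x / v)) from
    funext fun x => by ring]
  rw [MeasureTheory.integral_add hint1 hint2, h3, h4, zero_add]

/-- the double Gaussian integral giving the expected utility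
contribution of candidates whose estimate exceeds the threshold `θ`. -/
theorem stmt11 (μ β η σ θ : ℝ) (hη : 0 < η) (hσ : 0 < σ) :
    (∫ w' in Set.Ici θ, ∫ w : ℝ,
        w * ((1 / η) * gpdf ((w - μ) / η)) * ((1 / σ) * gpdf ((w' - w + β) / σ)))
    = μ * (1 - gcdf ((θ - μ + β) / Real.sqrt (η ^ 2 + σ ^ 2)))
      + (η ^ 2 / Real.sqrt (η ^ 2 + σ ^ 2)) * gpdf ((θ - μ + β) / Real.sqrt (η ^ 2 + σ ^ 2)) := by
  have hη' : η ≠ 0 := hη.ne'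
  have hσ' : σ ≠ 0 := hσ.ne'
  have hS : (0:ℝ) < η ^ 2 + σ ^ 2 := by positivity
  have hS' : η ^ 2 + σ ^ 2 ≠ 0 := hS.ne'
  set c := Real.sqrt (η ^ 2 + σ ^ 2) with hc_def
  have hc : 0 < c := Real.sqrt_pos.mpr hS
  have hc' : c ≠ 0 := hc.ne'
  have hc2 : c ^ 2 = η ^ 2 + σ ^ 2 := Real.sq_sqrt hS.le
  set v := η * σ / c with hv_def
  have hv : 0 < v := by positivity
  have hv' : v ≠ 0 := hv.ne'
  have hvc : v * c = η * σ := by rw [hv_def]; field_simp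
  -- inner integral
  have hinner : ∀ w' : ℝ,
      (∫ w : ℝ, w * ((1 / η) * gpdf ((w - μ) / η)) * ((1 / σ) * gpdf ((w' - w + β) / σ)))
      = ((1 / c) * gpdf ((w' - μ + β) / c)) * (μ + η ^ 2 * (w' - μ + β) / (η ^ 2 + σ ^ 2)) := by
    intro w'
    set m := μ + η ^ 2 * (w' - μ + β) / (η ^ 2 + σ ^ 2) with hm
    have hpt : ∀ w : ℝ, w * ((1 / η) * gpdf ((w - μ) / η)) * ((1 / σ) * gpdf ((w' - w + β) / σ))
        = ((1 / c) * gpdf ((w' - μ + β) / c)) * (w * ((1 / v) * gpdf ((w - m) / v))) := by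
      intro w
      have hsq : ((w - μ) / η) ^ 2 + ((w' - w + β) / σ) ^ 2
          = ((w - (μ + η ^ 2 * (w' - μ + β) / (η ^ 2 + σ ^ 2))) / (η * σ / c)) ^ 2
            + ((w' - μ + β) / c) ^ 2 := by
        simp only [div_pow, hc2]
        field_simp
        ring
      have hsq' : ((w - μ) / η) ^ 2 + ((w' - w + β) / σ) ^ 2
          = ((w - m) / v) ^ 2 + ((w' - μ + β) / c) ^ 2 := by
        rw [hm, hv_def]; exact hsq
      have hgg := gpdf_mul_gpdf hsq
      calc w * ((1 / η) * gpdf ((w - μ) / η)) * ((1 / σ) * gpdf ((w' - w + β) / σ))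
          = (gpdf ((w - μ) / η) * gpdf ((w' - w + β) / σ)) * (w * (1 / (η * σ))) := by ring
        _ = (gpdf ((w - m) / v) * gpdf ((w' - μ + β) / c)) * (w * (1 / (η * σ))) := by
            rw [hgg]
        _ = ((1 / c) * gpdf ((w' - μ + β) / c)) * (w * ((1 / v) * gpdf ((w - m) / v))) := by
            rw [← hvc]; field_simp
    simp_rw [hpt]
    rw [MeasureTheory.integral_const_mul, integral_mul_gpdf_div m v hv]
  calc (∫ w' in Set.Ici θ, ∫ w : ℝ,
        w * ((1 / η) * gpdf ((w - μ) / η)) * ((1 / σ) * gpdf ((w' - w + β) / σ)))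
      = ∫ w' in Set.Ici θ,
          ((1 / c) * gpdf ((w' - μ + β) / c)) * (μ + η ^ 2 * (w' - μ + β) / (η ^ 2 + σ ^ 2)) :=
        MeasureTheory.setIntegral_congr_fun measurableSet_Ici (fun w' _ => hinner w')
    _ = μ * (1 - gcdf ((θ - μ + β) / c)) + (η ^ 2 / c) * gpdf ((θ - μ + β) / c) := by
        rw [MeasureTheory.integral_Ici_eq_integral_Ioi]
        have htrans := setIntegral_comp_add_right_Ioi
          (fun w' => ((1 / c) * gpdf ((w' - μ + β) / c))
            * (μ + η ^ 2 * (w' - μ + β) / (η ^ 2 + σ ^ 2))) (θ - μ + β) (μ - β)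
        rw [show θ - μ + β + (μ - β) = θ by ring] at htrans
        rw [← htrans]
        have harg : ∀ x : ℝ, x + (μ - β) - μ + β = x := fun x => by ring
        simp only [harg]
        -- scaling
        set G : ℝ → ℝ := fun y => (1 / c) * gpdf y * (μ + η ^ 2 * c * y / (η ^ 2 + σ ^ 2))
          with hG
        have hGpt : ∀ x : ℝ, (1 / c) * gpdf (x / c) * (μ + η ^ 2 * x / (η ^ 2 + σ ^ 2))
            = G (x * c⁻¹) := by
          intro x
          rw [hG]
          simp only [div_eq_mul_inv]
          congr 2
          field_simp
        simp_rw [hGpt]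
        rw [MeasureTheory.integral_comp_mul_right_Ioi G _ (inv_pos.mpr hc), inv_inv,
          ← div_eq_mul_inv]
        have hsplit : ∀ y : ℝ, G y
            = (1 / c) * (μ * gpdf y + (η ^ 2 * c / (η ^ 2 + σ ^ 2)) * (y * gpdf y)) := by
          intro y; rw [hG]; ring
        simp_rw [hsplit]
        rw [MeasureTheory.integral_const_mul,
          MeasureTheory.integral_add
            ((integrable_gpdf.const_mul μ).integrableOn)
            ((integrable_id_gpdf.const_mul _).integrableOn),
          MeasureTheory.integral_const_mul, MeasureTheory.integral_const_mul,
          integral_Ioi_gpdf, integral_Ioi_id_gpdf]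
        rw [smul_eq_mul]
        have hk : η ^ 2 * c / (η ^ 2 + σ ^ 2) = η ^ 2 / c := by
          rw [← hc2]; field_simp
        rw [hk]
        field_simp
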